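/- Strohmer–Vershynin bound: for A ∈ ℝ^{n×n} invertible, x = A⁻¹b, and the randomized Kaczmarz iteration with row i chosen with probability ‖a_i‖²/‖A‖_F², one has E‖x_k − x‖² ≤ (1 − 1/(‖A⁻¹‖_{op}² ‖A‖_F²))^k ‖x_0 − x‖². -/

import Mathlib

open RealInnerProductSpace Finset Matrix
noncomputable section

/-- Coercion of a plain vector to Euclidean space (for norms and inner products). -/
def toE {n : ℕ} (v : Fin n → ℝ) : EuclideanSpace ℝ (Fin n) := WithLp.toLp 2 v

/-- The Markov transition operator of randomized Kaczmarz: `(kacT A b f) y` is the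
expectation of `f` at the next iterate started from `y`, the row `i` being chosen with
probability `‖a_i‖²/‖A‖_F²`. Its `k`-th iterate applied at `x₀` gives `E f(x_k)`. -/
def kacT {n : ℕ} (A : Matrix (Fin n) (Fin n) ℝ) (b : Fin n → ℝ)
    (f : (Fin n → ℝ) → ℝ) : (Fin n → ℝ) → ℝ := fun y =>
  ∑ i, (‖toE (A i)‖ ^ 2 / (∑ j, ‖toE (A j)‖ ^ 2)) *
    f (y + ((b i - ⟪toE (A i), toE y⟫) / ‖toE (A i)‖ ^ 2) • A i)

lemma toE_inner {n : ℕ} (u v : Fin n → ℝ) : ⟪toE u, toE v⟫ = ∑ i, u i * v i := by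
  simp [toE, PiLp.inner_apply, RCLike.inner_apply, mul_comm]

lemma toE_norm_sq {n : ℕ} (v : Fin n → ℝ) : ‖toE v‖ ^ 2 = ∑ i, v i ^ 2 := by
  rw [← real_inner_self_eq_norm_sq]
  rw [toE_inner]; simp [sq]

/-- Strohmer–Vershynin: `E ‖x_k - x‖² ≤ (1 - 1/(‖A⁻¹‖_op² ‖A‖_F²))^k ‖x_0 - x‖²`. -/
theorem strohmer_vershynin {n : ℕ} (A : Matrix (Fin n) (Fin n) ℝ)
    (hA : IsUnit A.det) (hrows : ∀ i, A i ≠ 0)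
    (b x x0 : Fin n → ℝ) (hx : A.mulVec x = b) (k : ℕ) :
    (kacT A b)^[k] (fun y => ‖toE (y - x)‖ ^ 2) x0
      ≤ (1 - 1 / (‖Matrix.toEuclideanCLM (𝕜 := ℝ) A⁻¹‖ ^ 2 * (∑ j, ‖toE (A j)‖ ^ 2))) ^ k *
          ‖toE (x0 - x)‖ ^ 2 := by
  set N : ℝ := ‖Matrix.toEuclideanCLM (𝕜 := ℝ) A⁻¹‖ with hN
  set F : ℝ := ∑ j, ‖toE (A j)‖ ^ 2 with hFdef
  set g : (Fin n → ℝ) → ℝ := fun y => ‖toE (y - x)‖ ^ 2 with hg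
  set c : ℝ := 1 - 1 / (N ^ 2 * F) with hc
  rcases Nat.eq_zero_or_pos n with hn | hn
  · -- degenerate case n = 0
    subst hn
    have hF0 : F = 0 := by simp [hFdef]
    have hc1 : c = 1 := by simp [hc, hF0]
    rw [hc1, one_pow, one_mul]
    cases k with
    | zero => simp [g]
    | succ m =>
        rw [Function.iterate_succ_apply']
        have : kacT A b ((kacT A b)^[m] g) x0 = 0 := by
          simp [kacT]
        rw [this]
        positivity
  · haveI : Nonempty (Fin n) := Fin.pos_iff_nonempty.mp hn
    -- basic positivity facts
    have hrow_pos : ∀ i, (0:ℝ) < ‖toE (A i)‖ ^ 2 := fun i => by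
      have h0 : toE (A i) ≠ 0 := fun h => hrows i ((WithLp.toLp_eq_zero 2).mp h)
      exact pow_pos (norm_pos_iff.mpr h0) 2
    have hF : 0 < F := Finset.sum_pos (fun i _ => hrow_pos i) ⟨Classical.arbitrary _, mem_univ _⟩
    -- the inverse bound ‖v‖ ≤ N ‖A v‖
    have hinv : ∀ v : Fin n → ℝ, ‖toE v‖ ≤ N * ‖toE (A.mulVec v)‖ := by
      intro v
      have h1 : Matrix.toEuclideanCLM (𝕜 := ℝ) A⁻¹ (toE (A.mulVec v)) = toE v := by
        have h1a : Matrix.toEuclideanCLM (𝕜 := ℝ) A⁻¹ (toE (A.mulVec v))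
            = toE (A⁻¹.mulVec (A.mulVec v)) := Matrix.toEuclideanCLM_toLp _ _
        rw [h1a, Matrix.mulVec_mulVec, Matrix.nonsing_inv_mul A hA, Matrix.one_mulVec]
      calc ‖toE v‖ = ‖Matrix.toEuclideanCLM (𝕜 := ℝ) A⁻¹ (toE (A.mulVec v))‖ := by rw [h1]
        _ ≤ N * ‖toE (A.mulVec v)‖ := (Matrix.toEuclideanCLM (𝕜 := ℝ) A⁻¹).le_opNorm _
    -- ‖A v‖² ≤ F ‖v‖² (Cauchy–Schwarz rowwise)
    have hCS : ∀ v : Fin n → ℝ, ‖toE (A.mulVec v)‖ ^ 2 ≤ F * ‖toE v‖ ^ 2 := by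
      intro v
      rw [toE_norm_sq, hFdef, Finset.sum_mul]
      refine Finset.sum_le_sum fun i _ => ?_
      have h2 : A.mulVec v i = ⟪toE (A i), toE v⟫ := by
        rw [toE_inner]; rfl
      rw [h2]
      calc ⟪toE (A i), toE v⟫ ^ 2 ≤ (‖toE (A i)‖ * ‖toE v‖) ^ 2 := by
            have h3 := abs_real_inner_le_norm (toE (A i)) (toE v)
            nlinarith [sq_abs ⟪toE (A i), toE v⟫, abs_nonneg ⟪toE (A i), toE v⟫]
        _ = ‖toE (A i)‖ ^ 2 * ‖toE v‖ ^ 2 := by ring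
    -- 1 ≤ N² F
    have hNF : 1 ≤ N ^ 2 * F := by
      set v : Fin n → ℝ := fun _ => 1 with hv
      have hv0 : (0:ℝ) < ‖toE v‖ ^ 2 := by
        have h0 : toE v ≠ 0 := by
          intro h
          have h00 := congrArg (fun w : EuclideanSpace ℝ (Fin n) => w (Classical.arbitrary _)) h
          simp [toE, hv] at h00
        exact pow_pos (norm_pos_iff.mpr h0) 2
      have h1 : ‖toE v‖ ^ 2 ≤ N ^ 2 * ‖toE (A.mulVec v)‖ ^ 2 := by
        have := hinv v
        nlinarith [norm_nonneg (toE v), norm_nonneg (toE (A.mulVec v)), hN ▸ norm_nonneg (Matrix.toEuclideanCLM (𝕜 := ℝ) A⁻¹)]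
      have h2 := hCS v
      have hNn : (0:ℝ) ≤ N := hN ▸ norm_nonneg _
      nlinarith
    have hNFpos : 0 < N ^ 2 * F := lt_of_lt_of_le one_pos hNF
    have hc0 : 0 ≤ c := by
      rw [hc, sub_nonneg]
      exact div_le_one_of_le₀ hNF (le_of_lt hNFpos)
    -- key one-step contraction
    have hstep : ∀ y, kacT A b g y ≤ c * g y := by
      intro y
      have hb : ∀ i, b i = ⟪toE (A i), toE y⟫ - ⟪toE (A i), toE (y - x)⟫ := by
        intro i
        rw [toE_inner, toE_inner]
        have : b i = A.mulVec x i := by rw [hx]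
        rw [this]
        show (∑ j, A i j * x j) = ∑ j, A i j * y j - ∑ j, A i j * (y - x) j
        rw [← Finset.sum_sub_distrib]
        congr 1; ext j
        show A i j * x j = A i j * y j - A i j * (y j - x j)
        ring
      have hterm : ∀ i, g (y + ((b i - ⟪toE (A i), toE y⟫) / ‖toE (A i)‖ ^ 2) • A i)
          = ‖toE (y - x)‖ ^ 2 - ⟪toE (A i), toE (y - x)⟫ ^ 2 / ‖toE (A i)‖ ^ 2 := by
        intro i
        set e : EuclideanSpace ℝ (Fin n) := toE (y - x) with he
        set a : EuclideanSpace ℝ (Fin n) := toE (A i) with ha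
        set t : ℝ := (b i - ⟪toE (A i), toE y⟫) / ‖toE (A i)‖ ^ 2 with ht
        have hts : t = -⟪a, e⟫ / ‖a‖ ^ 2 := by
          rw [ht, hb i]; ring_nf; rfl
        have harg : toE (y + t • A i - x) = e + t • a := by
          rw [add_sub_right_comm, he, ha]; simp only [toE, WithLp.toLp_add, WithLp.toLp_smul]
        show ‖toE (y + t • A i - x)‖ ^ 2 = ‖e‖ ^ 2 - ⟪a, e⟫ ^ 2 / ‖a‖ ^ 2
        rw [harg, norm_add_sq_real]
        have hna : (0:ℝ) < ‖a‖ ^ 2 := hrow_pos i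
        rw [real_inner_smul_right, norm_smul, hts, real_inner_comm e a]
        rw [mul_pow, Real.norm_eq_abs, sq_abs]
        field_simp
        ring
      -- now compute the sum
      have hsum : kacT A b g y
          = ‖toE (y - x)‖ ^ 2 - (∑ i, ⟪toE (A i), toE (y - x)⟫ ^ 2) / F := by
        unfold kacT
        rw [← hFdef]
        calc (∑ i, (‖toE (A i)‖ ^ 2 / F) *
              g (y + ((b i - ⟪toE (A i), toE y⟫) / ‖toE (A i)‖ ^ 2) • A i))
            = ∑ i, (‖toE (A i)‖ ^ 2 / F * ‖toE (y - x)‖ ^ 2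
                - ⟪toE (A i), toE (y - x)⟫ ^ 2 / F) := by
              refine Finset.sum_congr rfl fun i _ => ?_
              rw [hterm i]
              have hna : (0:ℝ) < ‖toE (A i)‖ ^ 2 := hrow_pos i
              have hna' : ‖toE (A i)‖ ≠ 0 := fun h => by simp [h] at hna
              field_simp
          _ = (∑ i, ‖toE (A i)‖ ^ 2 / F * ‖toE (y - x)‖ ^ 2)
                - ∑ i, ⟪toE (A i), toE (y - x)⟫ ^ 2 / F := by
              rw [Finset.sum_sub_distrib]
          _ = ‖toE (y - x)‖ ^ 2 - (∑ i, ⟪toE (A i), toE (y - x)⟫ ^ 2) / F := by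
              have hfs : (∑ i, ‖toE (A i)‖ ^ 2 / F * ‖toE (y - x)‖ ^ 2)
                  = ‖toE (y - x)‖ ^ 2 := by
                rw [← Finset.sum_mul, ← Finset.sum_div, ← hFdef,
                  div_self (ne_of_gt hF), one_mul]
              rw [hfs, ← Finset.sum_div]
      rw [hsum]
      -- ∑ inner² = ‖A(y-x)‖²
      have hsum2 : (∑ i, ⟪toE (A i), toE (y - x)⟫ ^ 2) = ‖toE (A.mulVec (y - x))‖ ^ 2 := by
        rw [toE_norm_sq]
        refine Finset.sum_congr rfl fun i _ => ?_
        rw [toE_inner]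
        rfl
      rw [hsum2]
      have hlow : ‖toE (y - x)‖ ^ 2 / (N ^ 2) ≤ ‖toE (A.mulVec (y - x))‖ ^ 2 := by
        have h1 := hinv (y - x)
        have hN2 : (0:ℝ) < N ^ 2 := by nlinarith
        rw [div_le_iff₀ hN2]
        nlinarith [norm_nonneg (toE (y - x)), norm_nonneg (toE (A.mulVec (y - x)))]
      have hdd : ‖toE (y - x)‖ ^ 2 / (N ^ 2) / F ≤ ‖toE (A.mulVec (y - x))‖ ^ 2 / F :=
        div_le_div_of_nonneg_right hlow hF.le
      show ‖toE (y - x)‖ ^ 2 - ‖toE (A.mulVec (y - x))‖ ^ 2 / F ≤ c * g y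
      have hgy : g y = ‖toE (y - x)‖ ^ 2 := rfl
      rw [hgy, hc]
      have hexp : (1 - 1 / (N ^ 2 * F)) * ‖toE (y - x)‖ ^ 2
          = ‖toE (y - x)‖ ^ 2 - ‖toE (y - x)‖ ^ 2 / N ^ 2 / F := by
        field_simp
      rw [hexp]
      linarith
    -- induction
    have hmain : ∀ m, ∀ y, (kacT A b)^[m] g y ≤ c ^ m * g y := by
      intro m
      induction m with
      | zero => intro y; simp
      | succ m ih =>
          intro y
          rw [Function.iterate_succ_apply']
          have hckm : (0:ℝ) ≤ c ^ m := pow_nonneg hc0 m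
          calc kacT A b ((kacT A b)^[m] g) y
              ≤ kacT A b (fun z => c ^ m * g z) y := by
                unfold kacT
                refine Finset.sum_le_sum fun i _ => ?_
                refine mul_le_mul_of_nonneg_left (ih _) ?_
                positivity
            _ = c ^ m * kacT A b g y := by
                unfold kacT
                rw [Finset.mul_sum]
                refine Finset.sum_congr rfl fun i _ => ?_
                ring
            _ ≤ c ^ m * (c * g y) := mul_le_mul_of_nonneg_left (hstep y) hckm
            _ = c ^ (m + 1) * g y := by ring
    have := hmain k x0
    simpa [g, hc] using this
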